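/- If G is a double-magical triple-ordered graph with clique number at most k, then χ(G) ≤ (k+1)/2 · C(k+2, 3) = k(k+1)²(k+2)/12. -/
import Mathlib

private def SS (n : ℕ) : ℕ := ∑ m ∈ Finset.range n, m ^ 2

private lemma sumsq6 (n : ℕ) : 6 * SS (n + 1) = n * (n + 1) * (2 * n + 1) := by
  induction n with
  | zero => simp [SS]
  | succ n ih =>
    have h : SS (n + 1 + 1) = SS (n + 1) + (n + 1) ^ 2 := Finset.sum_range_succ _ (n + 1)
    rw [h, Nat.mul_add, ih]
    ring

private lemma SS_shift (n : ℕ) : ∑ j ∈ Finset.range n, (j + 1) ^ 2 = SS (n + 1) := by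
  rw [SS, Finset.sum_range_succ']
  simp

private lemma bigsum12 (k : ℕ) :
    12 * ∑ j ∈ Finset.range k, SS (j + 2) = k * (k + 1) ^ 2 * (k + 2) := by
  induction k with
  | zero => simp
  | succ k ih =>
    rw [Finset.sum_range_succ, Nat.mul_add, ih]
    have h6 : 6 * SS (k + 2) = (k + 1) * (k + 1 + 1) * (2 * (k + 1) + 1) := sumsq6 (k + 1)
    rw [show (12 : ℕ) * SS (k + 2) = 2 * (6 * SS (k + 2)) from by ring, h6]
    ring

/-- A double-magical triple-ordered graph with clique number at most `k`
has chromatic number at most `(k+1)/2 · C(k+2,3) = k(k+1)²(k+2)/12`. -/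
theorem doubleMagical_colorable {V : Type*} [Fintype V] (G G1 G2 : SimpleGraph V)
    (lt1 lt2 lt3 : V → V → Prop)
    [IsStrictTotalOrder V lt1] [IsStrictTotalOrder V lt2] [IsStrictTotalOrder V lt3]
    (hmag1 : ∀ a b c : V, lt1 a b → lt1 b c → G1.Adj a b → G1.Adj b c → ¬ G1.Adj a c →
      lt2 b a ∧ lt2 b c)
    (hmag2 : ∀ a b c : V, lt1 a b → lt1 b c → G2.Adj a b → G2.Adj b c → ¬ G2.Adj a c →
      lt3 b a ∧ lt3 b c)
    (hE : ∀ u v : V, G.Adj u v ↔ G1.Adj u v ∧ G2.Adj u v)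
    (k : ℕ) (hclique : G.CliqueFree (k + 1)) :
    G.Colorable (k * (k + 1) ^ 2 * (k + 2) / 12) := by
  classical
  have hG1 : ∀ {a b : V}, G.Adj a b → G1.Adj a b := fun h => ((hE _ _).1 h).1
  have hG2 : ∀ {a b : V}, G.Adj a b → G2.Adj a b := fun h => ((hE _ _).1 h).2
  have asym1 : ∀ {a b : V}, lt1 a b → lt1 b a → False :=
    fun h h' => irrefl_of lt1 _ (trans_of lt1 h h')
  have asym2 : ∀ {a b : V}, lt2 a b → lt2 b a → False :=
    fun h h' => irrefl_of lt2 _ (trans_of lt2 h h')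
  have asym3 : ∀ {a b : V}, lt3 a b → lt3 b a → False :=
    fun h h' => irrefl_of lt3 _ (trans_of lt3 h h')
  -- the height function: max size of a clique containing `v` all of whose other
  -- elements are `Q`-below `v`
  obtain ⟨hgt, hgt_def⟩ : ∃ hgt : (V → V → Prop) → V → ℕ, hgt = fun Q v =>
      ((Finset.univ.powerset.filter fun s : Finset V =>
        v ∈ s ∧ G.IsClique (s : Set V) ∧ ∀ w ∈ s, w ≠ v → Q w v).sup Finset.card) :=
    ⟨_, rfl⟩
  have hgt_ge : ∀ (Q : V → V → Prop) (v : V) (s : Finset V), v ∈ s → G.IsClique (s : Set V) →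
      (∀ w ∈ s, w ≠ v → Q w v) → s.card ≤ hgt Q v := by
    intro Q v s h1 h2 h3
    simp only [hgt_def]
    exact Finset.le_sup (Finset.mem_filter.mpr
      ⟨Finset.mem_powerset.mpr (Finset.subset_univ s), h1, h2, h3⟩)
  have hgt_witness : ∀ (Q : V → V → Prop) (v : V), ∃ s : Finset V, v ∈ s ∧
      G.IsClique (s : Set V) ∧ (∀ w ∈ s, w ≠ v → Q w v) ∧ s.card = hgt Q v := by
    intro Q v
    have hne : ({v} : Finset V) ∈ (Finset.univ.powerset.filter fun s : Finset V =>
        v ∈ s ∧ G.IsClique (s : Set V) ∧ ∀ w ∈ s, w ≠ v → Q w v) := by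
      refine Finset.mem_filter.mpr ⟨Finset.mem_powerset.mpr (Finset.subset_univ _),
        Finset.mem_singleton_self v, by simp [SimpleGraph.isClique_singleton], ?_⟩
      intro w hw hwv
      exact absurd (Finset.mem_singleton.mp hw) hwv
    obtain ⟨s, hs, hsup⟩ := Finset.exists_mem_eq_sup _ ⟨_, hne⟩ Finset.card
    obtain ⟨-, h1, h2, h3⟩ := Finset.mem_filter.mp hs
    refine ⟨s, h1, h2, h3, ?_⟩
    simp only [hgt_def]
    exact hsup.symm
  have hgt_one : ∀ (Q : V → V → Prop) (v : V), 1 ≤ hgt Q v := by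
    intro Q v
    have := hgt_ge Q v {v} (Finset.mem_singleton_self v)
      (by simp [SimpleGraph.isClique_singleton])
      (fun w hw hwv => absurd (Finset.mem_singleton.mp hw) hwv)
    simpa using this
  have hgt_le : ∀ (Q : V → V → Prop) (v : V), hgt Q v ≤ k := by
    intro Q v
    simp only [hgt_def]
    apply Finset.sup_le
    intro s hs
    obtain ⟨-, -, h2, -⟩ := Finset.mem_filter.mp hs
    by_contra hlt
    push_neg at hlt
    obtain ⟨t, hts, htcard⟩ := Finset.exists_subset_card_eq (n := k + 1) hlt
    exact hclique t ⟨h2.subset (Finset.coe_subset.mpr hts), htcard⟩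
  have hgt_mono : ∀ (Q Q' : V → V → Prop), (∀ w x, Q w x → Q' w x) →
      ∀ v, hgt Q v ≤ hgt Q' v := by
    intro Q Q' h v
    obtain ⟨s, h1, h2, h3, h4⟩ := hgt_witness Q v
    calc hgt Q v = s.card := h4.symm
      _ ≤ hgt Q' v := hgt_ge Q' v s h1 h2 (fun w hw hne => h _ _ (h3 w hw hne))
  -- the key increment lemma
  have increment : ∀ (Q Q' : V → V → Prop) (v u : V), G.Adj v u → lt1 v u →
      (∀ w, Q w v → lt1 w v) →
      (∀ w, Q w v → G.Adj w v → G.Adj w u) →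
      (∀ w, Q w v → Q' w u) → Q' v u →
      hgt Q v + 1 ≤ hgt Q' u := by
    intro Q Q' v u hadj h1 hQlt hadjext hQQ' hQ'vu
    obtain ⟨s, hvs, hcl, hQs, hcard⟩ := hgt_witness Q v
    have hvu : v ≠ u := fun h => irrefl_of lt1 u (h ▸ h1)
    have hus : u ∉ s := by
      intro hus
      exact asym1 h1 (hQlt u (hQs u hus hvu.symm))
    have hclique' : G.IsClique ((insert u s : Finset V) : Set V) := by
      rw [Finset.coe_insert]
      refine hcl.insert ?_
      intro b hb hub
      rcases eq_or_ne b v with rfl | hbv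
      · exact hadj.symm
      · have hQb : Q b v := hQs b (Finset.mem_coe.mp hb) hbv
        have hadjbv : G.Adj b v := hcl hb (Finset.mem_coe.mpr hvs) hbv
        exact (hadjext b hQb hadjbv).symm
    have hcond : ∀ w ∈ insert u s, w ≠ u → Q' w u := by
      intro w hw hwu
      rcases Finset.mem_insert.mp hw with rfl | hws
      · exact absurd rfl hwu
      rcases eq_or_ne w v with rfl | hwv
      · exact hQ'vu
      · exact hQQ' w (hQs w hws hwv)
    have := hgt_ge Q' u (insert u s) (Finset.mem_insert_self u s) hclique' hcond
    rw [Finset.card_insert_of_notMem hus, hcard] at this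
    exact this
  -- the four increment cases
  have inc_pp : ∀ v u, G.Adj v u → lt1 v u → lt2 v u → lt3 v u →
      hgt (fun w x => lt1 w x ∧ lt2 w x ∧ lt3 w x) v + 1 ≤
      hgt (fun w x => lt1 w x ∧ lt2 w x ∧ lt3 w x) u := by
    intro v u hadj h1 h2 h3
    refine increment _ _ v u hadj h1 (fun w q => q.1) ?_
      (fun w q => ⟨trans_of lt1 q.1 h1, trans_of lt2 q.2.1 h2, trans_of lt3 q.2.2 h3⟩)
      ⟨h1, h2, h3⟩
    rintro w ⟨w1, w2, w3⟩ hwv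
    have e1 : G1.Adj w u := by
      by_contra hne
      exact asym2 w2 (hmag1 w v u w1 h1 (hG1 hwv) (hG1 hadj) hne).1
    have e2 : G2.Adj w u := by
      by_contra hne
      exact asym3 w3 (hmag2 w v u w1 h1 (hG2 hwv) (hG2 hadj) hne).1
    exact (hE w u).mpr ⟨e1, e2⟩
  have inc_pm : ∀ v u, G.Adj v u → lt1 v u → lt2 v u → lt3 u v →
      hgt (fun w x => lt1 w x ∧ lt2 w x) v + 1 ≤
      hgt (fun w x => lt1 w x ∧ lt2 w x) u := by
    intro v u hadj h1 h2 h3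
    refine increment _ _ v u hadj h1 (fun w q => q.1) ?_
      (fun w q => ⟨trans_of lt1 q.1 h1, trans_of lt2 q.2 h2⟩) ⟨h1, h2⟩
    rintro w ⟨w1, w2⟩ hwv
    have e1 : G1.Adj w u := by
      by_contra hne
      exact asym2 w2 (hmag1 w v u w1 h1 (hG1 hwv) (hG1 hadj) hne).1
    have e2 : G2.Adj w u := by
      by_contra hne
      exact asym3 h3 (hmag2 w v u w1 h1 (hG2 hwv) (hG2 hadj) hne).2
    exact (hE w u).mpr ⟨e1, e2⟩
  have inc_mp : ∀ v u, G.Adj v u → lt1 v u → lt2 u v → lt3 v u →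
      hgt (fun w x => lt1 w x ∧ lt3 w x) v + 1 ≤
      hgt (fun w x => lt1 w x ∧ lt3 w x) u := by
    intro v u hadj h1 h2 h3
    refine increment _ _ v u hadj h1 (fun w q => q.1) ?_
      (fun w q => ⟨trans_of lt1 q.1 h1, trans_of lt3 q.2 h3⟩) ⟨h1, h3⟩
    rintro w ⟨w1, w3⟩ hwv
    have e1 : G1.Adj w u := by
      by_contra hne
      exact asym2 h2 (hmag1 w v u w1 h1 (hG1 hwv) (hG1 hadj) hne).2
    have e2 : G2.Adj w u := by
      by_contra hne
      exact asym3 w3 (hmag2 w v u w1 h1 (hG2 hwv) (hG2 hadj) hne).1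
    exact (hE w u).mpr ⟨e1, e2⟩
  have inc_mm : ∀ v u, G.Adj v u → lt1 v u → lt2 u v → lt3 u v →
      hgt (fun w x => lt1 w x) v + 1 ≤ hgt (fun w x => lt1 w x) u := by
    intro v u hadj h1 h2 h3
    refine increment _ _ v u hadj h1 (fun w q => q) ?_
      (fun w q => trans_of lt1 q h1) h1
    intro w w1 hwv
    have e1 : G1.Adj w u := by
      by_contra hne
      exact asym2 h2 (hmag1 w v u w1 h1 (hG1 hwv) (hG1 hadj) hne).2
    have e2 : G2.Adj w u := by
      by_contra hne
      exact asym3 h3 (hmag2 w v u w1 h1 (hG2 hwv) (hG2 hadj) hne).2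
    exact (hE w u).mpr ⟨e1, e2⟩
  -- the color tuple (a, d, b, c)
  set col : V → ℕ × ℕ × ℕ × ℕ := fun v =>
    (hgt (fun w x => lt1 w x ∧ lt2 w x ∧ lt3 w x) v,
     hgt (fun w x => lt1 w x) v,
     hgt (fun w x => lt1 w x ∧ lt2 w x) v,
     hgt (fun w x => lt1 w x ∧ lt3 w x) v) with col_def
  -- properness
  have key : ∀ v u, G.Adj v u → lt1 v u → col v ≠ col u := by
    intro v u hadj h1 heq
    simp only [col_def, Prod.mk.injEq] at heq
    obtain ⟨ea, ed, eb, ec⟩ := heq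
    have hvu : v ≠ u := hadj.ne
    rcases trichotomous_of lt2 v u with h2 | h2 | h2
    · rcases trichotomous_of lt3 v u with h3 | h3 | h3
      · have := inc_pp v u hadj h1 h2 h3; omega
      · exact hvu h3
      · have := inc_pm v u hadj h1 h2 h3; omega
    · exact hvu h2
    · rcases trichotomous_of lt3 v u with h3 | h3 | h3
      · have := inc_mp v u hadj h1 h2 h3; omega
      · exact hvu h3
      · have := inc_mm v u hadj h1 h2 h3; omega
  have proper : ∀ {x y : V}, G.Adj x y → col x ≠ col y := by
    intro x y hxy
    rcases trichotomous_of lt1 x y with h1 | h1 | h1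
    · exact key x y hxy h1
    · exact absurd h1 hxy.ne
    · exact (key y x hxy.symm h1).symm
  -- the color set
  set Sf : Finset (ℕ × ℕ × ℕ × ℕ) := (Finset.range k).biUnion (fun i =>
    (Finset.range (k - i)).biUnion (fun j =>
      {i + 1} ×ˢ {i + 1 + j} ×ˢ Finset.Icc (i + 1) (i + 1 + j) ×ˢ
        Finset.Icc (i + 1) (i + 1 + j))) with Sf_def
  have hmem : ∀ v, col v ∈ Sf := by
    intro v
    have h1a := hgt_one (fun w x => lt1 w x ∧ lt2 w x ∧ lt3 w x) v
    have hdk := hgt_le (fun w x => lt1 w x) v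
    have hab := hgt_mono (fun w x => lt1 w x ∧ lt2 w x ∧ lt3 w x)
      (fun w x => lt1 w x ∧ lt2 w x) (fun w x q => ⟨q.1, q.2.1⟩) v
    have hac := hgt_mono (fun w x => lt1 w x ∧ lt2 w x ∧ lt3 w x)
      (fun w x => lt1 w x ∧ lt3 w x) (fun w x q => ⟨q.1, q.2.2⟩) v
    have hbd := hgt_mono (fun w x => lt1 w x ∧ lt2 w x)
      (fun w x => lt1 w x) (fun w x q => q.1) v
    have hcd := hgt_mono (fun w x => lt1 w x ∧ lt3 w x)
      (fun w x => lt1 w x) (fun w x q => q.1) v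
    set a := hgt (fun w x => lt1 w x ∧ lt2 w x ∧ lt3 w x) v
    set d := hgt (fun w x => lt1 w x) v
    set b := hgt (fun w x => lt1 w x ∧ lt2 w x) v
    set c := hgt (fun w x => lt1 w x ∧ lt3 w x) v
    have had : a ≤ d := le_trans hab hbd
    refine Finset.mem_biUnion.mpr ⟨a - 1, Finset.mem_range.mpr (by omega), ?_⟩
    refine Finset.mem_biUnion.mpr ⟨d - a, Finset.mem_range.mpr (by omega), ?_⟩
    simp only [col_def, Finset.mem_product, Finset.mem_singleton, Finset.mem_Icc]
    refine ⟨by omega, by omega, ⟨by omega, by omega⟩, by omega, by omega⟩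
  -- build the coloring
  let C : G.Coloring {x // x ∈ Sf} :=
    SimpleGraph.Coloring.mk (fun v => ⟨col v, hmem v⟩)
      (fun hadj h => proper hadj (congrArg Subtype.val h))
  have hcol := C.colorable
  rw [Fintype.card_coe] at hcol
  refine hcol.mono ?_
  -- counting
  have step1 : Sf.card ≤ ∑ i ∈ Finset.range k, ∑ j ∈ Finset.range (k - i), (j + 1) ^ 2 := by
    refine le_trans Finset.card_biUnion_le ?_
    refine Finset.sum_le_sum ?_
    intro i _
    refine le_trans Finset.card_biUnion_le ?_
    refine Finset.sum_le_sum ?_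
    intro j _
    have hicc : (Finset.Icc (i + 1) (i + 1 + j)).card = j + 1 := by
      rw [Nat.card_Icc]; omega
    simp only [Finset.card_product, Finset.card_singleton, hicc]
    ring_nf
    omega
  have step2 : ∑ i ∈ Finset.range k, ∑ j ∈ Finset.range (k - i), (j + 1) ^ 2
      = ∑ j ∈ Finset.range k, SS (j + 2) := by
    calc ∑ i ∈ Finset.range k, ∑ j ∈ Finset.range (k - i), (j + 1) ^ 2
        = ∑ i ∈ Finset.range k, SS (k - i + 1) := by
          refine Finset.sum_congr rfl ?_
          intro i _
          exact SS_shift (k - i)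
      _ = ∑ i ∈ Finset.range k, SS (k - 1 - i + 2) := by
          refine Finset.sum_congr rfl ?_
          intro i hi
          have := Finset.mem_range.mp hi
          congr 1
          omega
      _ = ∑ j ∈ Finset.range k, SS (j + 2) := Finset.sum_range_reflect (fun j => SS (j + 2)) k
  calc Sf.card ≤ ∑ j ∈ Finset.range k, SS (j + 2) := by rw [← step2]; exact step1
    _ = k * (k + 1) ^ 2 * (k + 2) / 12 := by
        rw [← bigsum12 k, Nat.mul_div_cancel_left _ (by norm_num)]
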